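/- Let |ψ⟩ be a state in H_A⊗H_B⊗H_C⊗H_G whose reduced density matrix on H_A is full rank, and let A₀, A₁ be Hermitian unitary operators on H_A, and B₁ on H_B, C₁ on H_C Hermitian unitaries, such that (A₀+A₁)/√2 ⊗ B₁ ⊗ C₁ ⊗ 1 |ψ⟩ = ±|ψ⟩. Then A₀ and A₁ anticommute: A₀A₁ + A₁A₀ = 0. -/

import Mathlib

open Matrix Finset
open scoped Kronecker

noncomputable section

/-- If `(A₀+A₁)/√2 ⊗ B₁ ⊗ C₁ ⊗ 1 |ψ⟩ = ±|ψ⟩` for Hermitian unitaries and the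
reduced state of `|ψ⟩` on `H_A` is full rank, then `A₀` and `A₁` anticommute. -/
theorem stmt_10 {nA nB nC nG : Type*}
    [Fintype nA] [Fintype nB] [Fintype nC] [Fintype nG]
    [DecidableEq nA] [DecidableEq nB] [DecidableEq nC] [DecidableEq nG]
    (ψ : nA × nB × nC × nG → ℂ)
    (A0 A1 : Matrix nA nA ℂ) (B1 : Matrix nB nB ℂ) (C1 : Matrix nC nC ℂ)
    (hA0 : A0.IsHermitian) (hA1 : A1.IsHermitian)
    (hB1 : B1.IsHermitian) (hC1 : C1.IsHermitian)
    (hA0sq : A0 * A0 = 1) (hA1sq : A1 * A1 = 1)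
    (hB1sq : B1 * B1 = 1) (hC1sq : C1 * C1 = 1)
    (hfull : (Matrix.of fun i i' : nA =>
        ∑ x : nB × nC × nG, ψ (i, x) * star (ψ (i', x))).det ≠ 0)
    (ε : ℂ) (hε : ε = 1 ∨ ε = -1)
    (heig : ((((1 / Real.sqrt 2 : ℝ) : ℂ) • ((A0 + A1) ⊗ₖ (B1 ⊗ₖ (C1 ⊗ₖ
        (1 : Matrix nG nG ℂ))))).mulVec ψ) = ε • ψ) :
    A0 * A1 + A1 * A0 = 0 := by
  set D : Matrix nA nA ℂ := A0 * A1 + A1 * A0 with hDdef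
  set c : ℂ := ((1 / Real.sqrt 2 : ℝ) : ℂ) with hcdef
  set M : Matrix (nA × nB × nC × nG) (nA × nB × nC × nG) ℂ :=
    c • ((A0 + A1) ⊗ₖ (B1 ⊗ₖ (C1 ⊗ₖ (1 : Matrix nG nG ℂ)))) with hMdef
  have hε2 : ε * ε = 1 := by rcases hε with h | h <;> simp [h]
  have hc2 : c * c = 1 / 2 := by
    have h2 : (Real.sqrt 2) * (Real.sqrt 2) = 2 := Real.mul_self_sqrt (by norm_num)
    have hne : Real.sqrt 2 ≠ 0 := by positivity
    rw [hcdef]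
    push_cast
    field_simp
    exact_mod_cast (congrArg (fun r : ℝ => (r : ℂ)) (Real.sq_sqrt (by norm_num : (0:ℝ) ≤ 2))).symm
  have hsum : (A0 + A1) * (A0 + A1) = (2 : ℂ) • 1 + D := by
    rw [hDdef]
    simp only [add_mul, mul_add, hA0sq, hA1sq]
    module
  have hM2 : M * M = 1 + (1 / 2 : ℂ) • (D ⊗ₖ (1 : Matrix (nB × nC × nG) (nB × nC × nG) ℂ)) := by
    rw [hMdef, Matrix.smul_mul, Matrix.mul_smul, smul_smul, hc2,
      ← Matrix.mul_kronecker_mul, ← Matrix.mul_kronecker_mul, ← Matrix.mul_kronecker_mul,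
      hB1sq, hC1sq, one_mul, Matrix.one_kronecker_one, Matrix.one_kronecker_one, hsum,
      Matrix.add_kronecker, Matrix.smul_kronecker, Matrix.one_kronecker_one, smul_add,
      smul_smul]
    norm_num
  have hψ : (M * M).mulVec ψ = ψ := by
    rw [← Matrix.mulVec_mulVec, heig, Matrix.mulVec_smul, heig, smul_smul, hε2, one_smul]
  rw [hM2, Matrix.add_mulVec, Matrix.one_mulVec, Matrix.smul_mulVec,
    add_eq_left, smul_eq_zero] at hψ
  have hker : (D ⊗ₖ (1 : Matrix (nB × nC × nG) (nB × nC × nG) ℂ)).mulVec ψ = 0 := by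
    rcases hψ with h | h
    · norm_num at h
    · exact h
  have hker' : ∀ (i : nA) (x : nB × nC × nG), ∑ j, D i j * ψ (j, x) = 0 := by
    intro i x
    have := congrFun hker (i, x)
    simpa [Matrix.mulVec, dotProduct, Fintype.sum_prod_type, Matrix.kroneckerMap_apply,
      Matrix.one_apply, mul_ite, mul_assoc] using this
  set ρ : Matrix nA nA ℂ :=
    Matrix.of fun i i' : nA => ∑ x : nB × nC × nG, ψ (i, x) * star (ψ (i', x)) with hρdef
  have hDρ : D * ρ = 0 := by
    ext i i'
    simp only [Matrix.mul_apply, Matrix.zero_apply, hρdef, Matrix.of_apply]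
    calc ∑ j, D i j * ∑ x, ψ (j, x) * star (ψ (i', x))
        = ∑ x : nB × nC × nG, (∑ j, D i j * ψ (j, x)) * star (ψ (i', x)) := by
          simp_rw [Finset.mul_sum, Finset.sum_mul, ← mul_assoc]
          exact Finset.sum_comm
      _ = 0 := by simp [hker']
  calc D = D * (ρ * ρ⁻¹) := by rw [Matrix.mul_nonsing_inv ρ (isUnit_iff_ne_zero.mpr hfull), mul_one]
    _ = (D * ρ) * ρ⁻¹ := by rw [mul_assoc]
    _ = 0 := by rw [hDρ, zero_mul]
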